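/- The E_8 root system X ⊂ ℝ^8, consisting of the 112 vectors ±e_i ± e_j (1 ≤ i < j ≤ 8, all sign choices) together with the 128 vectors all of whose coordinates are ±1/2 with an even number of minus signs, is infinitesimally jammed: every map y : X → ℝ^8 satisfying ⟨x, y(x)⟩ = 0 for all x ∈ X and ⟨x, y(x')⟩ + ⟨x', y(x)⟩ ≤ 0 for all distinct x, x' ∈ X with ⟨x, x'⟩ = 1 admits a skew-symmetric linear map Φ : ℝ^8 → ℝ^8 (⟨Φu, v⟩ = −⟨u, Φv⟩ for all u, v) with y(x) = Φ x for all x ∈ X. -/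

import Mathlib

open scoped RealInnerProductSpace

/-- The `Dₙ` root system: all vectors `±eᵢ ± eⱼ` with `i < j`. -/
def DRootSystem (n : ℕ) : Set (EuclideanSpace ℝ (Fin n)) :=
  { v | ∃ i j : Fin n, i < j ∧ ∃ s t : ℝ, (s = 1 ∨ s = -1) ∧ (t = 1 ∨ t = -1) ∧
      v = s • EuclideanSpace.single i (1 : ℝ) + t • EuclideanSpace.single j (1 : ℝ) }

/-- The `E₈` root system: the vectors `±eᵢ ± eⱼ` (`i < j`) together with the vectors
all of whose coordinates are `±1/2`, with an even number of minus signs. -/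
def E8RootSystem : Set (EuclideanSpace ℝ (Fin 8)) :=
  DRootSystem 8 ∪
    { v | (∀ i, v i = 1 / 2 ∨ v i = -(1 / 2)) ∧ Even {i : Fin 8 | v i = -(1 / 2)}.ncard }

local notation "V8" => EuclideanSpace ℝ (Fin 8)

lemma inner_euc (x y : V8) : ⟪x, y⟫ = ∑ i, x i * y i := by
  rw [PiLp.inner_apply]; refine Finset.sum_congr rfl fun i _ => ?_; simp [mul_comm]

lemma pair_apply (i j k : Fin 8) (s t : ℝ) :
    (s • EuclideanSpace.single i (1:ℝ) + t • EuclideanSpace.single j (1:ℝ)) k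
      = (if k = i then s else 0) + (if k = j then t else 0) := by
  simp [EuclideanSpace.single_apply, mul_ite]

def E8Lat (v : V8) : Prop :=
  ((∀ i, ∃ m : ℤ, v i = m) ∨ (∀ i, ∃ m : ℤ, v i = m + 1/2)) ∧ (∃ k : ℤ, ∑ i, v i = 2 * k)

lemma lat_sub {v w : V8} (hv : E8Lat v) (hw : E8Lat w) : E8Lat (v - w) := by
  obtain ⟨hv1, kv, hkv⟩ := hv
  obtain ⟨hw1, kw, hkw⟩ := hw
  constructor
  · rcases hv1 with hv1 | hv1 <;> rcases hw1 with hw1 | hw1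
    · left; intro i
      obtain ⟨a, ha⟩ := hv1 i; obtain ⟨b, hb⟩ := hw1 i
      exact ⟨a - b, by simp only [PiLp.sub_apply]; rw [ha, hb]; push_cast; ring⟩
    · right; intro i
      obtain ⟨a, ha⟩ := hv1 i; obtain ⟨b, hb⟩ := hw1 i
      exact ⟨a - b - 1, by simp only [PiLp.sub_apply]; rw [ha, hb]; push_cast; ring⟩
    · right; intro i
      obtain ⟨a, ha⟩ := hv1 i; obtain ⟨b, hb⟩ := hw1 i
      exact ⟨a - b, by simp only [PiLp.sub_apply]; rw [ha, hb]; push_cast; ring⟩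
    · left; intro i
      obtain ⟨a, ha⟩ := hv1 i; obtain ⟨b, hb⟩ := hw1 i
      exact ⟨a - b, by simp only [PiLp.sub_apply]; rw [ha, hb]; push_cast; ring⟩
  · refine ⟨kv - kw, ?_⟩
    have : ∑ i, (v - w) i = ∑ i, v i - ∑ i, w i := by
      rw [← Finset.sum_sub_distrib]; rfl
    rw [this, hkv, hkw]; push_cast; ring

lemma lat_neg {v : V8} (hv : E8Lat v) : E8Lat (-v) := by
  have : -v = (0 : V8) - v := by simp
  rw [this]
  refine lat_sub ?_ hv
  exact ⟨Or.inl fun i => ⟨0, by simp⟩, ⟨0, by simp⟩⟩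

lemma lat_add {v w : V8} (hv : E8Lat v) (hw : E8Lat w) : E8Lat (v + w) := by
  have : v + w = v - (-w) := by abel
  rw [this]; exact lat_sub hv (lat_neg hw)

lemma lat_normsq_even {v : V8} (hv : E8Lat v) : ∃ k : ℤ, ∑ i, (v i)^2 = 2 * k := by
  obtain ⟨hv1, kv, hkv⟩ := hv
  rcases hv1 with h | h
  · choose m hm using h
    have hs : ∑ i, v i = ((∑ i, m i : ℤ) : ℝ) := by push_cast; exact Finset.sum_congr rfl fun i _ => hm i
    have hmk : (∑ i, m i : ℤ) = 2 * kv := by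
      have := hkv; rw [hs] at this; exact_mod_cast this
    have heven : Even (∑ i, (m i)^2) := by
      have h2 : Even (∑ i, ((m i)^2 - m i)) := by
        apply Finset.even_sum
        intro i _
        have : (m i)^2 - m i = (m i - 1) * ((m i - 1) + 1) := by ring
        rw [this]; exact Int.even_mul_succ_self _
      have h3 : Even (∑ i, m i) := ⟨kv, by omega⟩
      have h4 : ∑ i, ((m i)^2 - m i) = ∑ i, (m i)^2 - ∑ i, m i := Finset.sum_sub_distrib _ _
      rw [h4] at h2
      rcases h2 with ⟨a, ha⟩; rcases h3 with ⟨b, hb⟩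
      exact ⟨a + b, by omega⟩
    obtain ⟨k, hk⟩ := heven
    refine ⟨k, ?_⟩
    have : ∑ i, (v i)^2 = ((∑ i, (m i)^2 : ℤ) : ℝ) := by
      push_cast; exact Finset.sum_congr rfl fun i _ => by rw [hm i]
    rw [this, hk]; push_cast; ring
  · choose m hm using h
    have key : ∑ i, (v i)^2 = ((∑ i, ((m i)^2 + m i) : ℤ) : ℝ) + 2 := by
      have : ∀ i, (v i)^2 = ((m i)^2 + m i : ℤ) + 1/4 := by
        intro i; rw [hm i]; push_cast; ring
      rw [Finset.sum_congr rfl fun i _ => this i]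
      rw [Finset.sum_add_distrib]
      push_cast; norm_num
    have heven : Even (∑ i, ((m i)^2 + m i)) := by
      apply Finset.even_sum
      intro i _
      have : (m i)^2 + m i = m i * (m i + 1) := by ring
      rw [this]; exact Int.even_mul_succ_self _
    obtain ⟨k, hk⟩ := heven
    refine ⟨k + 1, ?_⟩
    rw [key, hk]; push_cast; ring

lemma inner_pair_left (i j : Fin 8) (s t : ℝ) (v : V8) :
    ⟪s • EuclideanSpace.single i (1:ℝ) + t • EuclideanSpace.single j (1:ℝ), v⟫
      = s * v i + t * v j := by
  rw [inner_add_left, real_inner_smul_left, real_inner_smul_left]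
  rw [EuclideanSpace.inner_single_left, EuclideanSpace.inner_single_left]
  simp only [map_one]; ring

lemma normsq_eq_inner (v : V8) : ∑ i, (v i)^2 = ⟪v, v⟫ := by
  rw [inner_euc]; exact Finset.sum_congr rfl fun i _ => (sq (v i)).symm ▸ by ring

lemma mem_D_pair {i j : Fin 8} (hij : i ≠ j) {s t : ℝ}
    (hs : s = 1 ∨ s = -1) (ht : t = 1 ∨ t = -1) :
    s • EuclideanSpace.single i (1:ℝ) + t • EuclideanSpace.single j (1:ℝ) ∈ DRootSystem 8 := by
  rcases lt_or_gt_of_ne hij with h | h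
  · exact ⟨i, j, h, s, t, hs, ht, rfl⟩
  · exact ⟨j, i, h, t, s, ht, hs, by abel⟩

lemma sum_pair (i j : Fin 8) (s t : ℝ) :
    ∑ k, (s • EuclideanSpace.single i (1:ℝ) + t • EuclideanSpace.single j (1:ℝ)) k = s + t := by
  simp only [pair_apply]
  rw [Finset.sum_add_distrib]
  simp [Finset.sum_ite_eq']

lemma ncard_neg_half (v : V8) (hv : ∀ i, v i = 1/2 ∨ v i = -(1/2)) :
    ∑ i, v i = 4 - ({i : Fin 8 | v i = -(1 / 2)}.ncard : ℝ) := by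
  classical
  have h1 : {i : Fin 8 | v i = -(1 / 2)}.ncard
      = (Finset.univ.filter (fun i => v i = -(1/2))).card := by
    rw [Set.ncard_eq_toFinset_card']
    congr 1
    ext i; simp
  have h2 : ∀ i, v i = 1/2 - (if v i = -(1/2) then 1 else 0) := by
    intro i
    rcases hv i with h | h <;> rw [h] <;> norm_num
  rw [Finset.sum_congr rfl fun i _ => h2 i, Finset.sum_sub_distrib, Finset.sum_boole, h1]
  norm_num

lemma mem_iff (v : V8) : v ∈ E8RootSystem ↔ E8Lat v ∧ ∑ i, (v i)^2 = 2 := by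
  classical
  constructor
  · rintro (⟨i, j, hij, s, t, hs, ht, rfl⟩ | ⟨h1, h2⟩)
    · have hne : i ≠ j := ne_of_lt hij
      refine ⟨⟨Or.inl ?_, ?_⟩, ?_⟩
      · intro k
        rw [pair_apply]
        by_cases hk : k = i <;> by_cases hk' : k = j
        · exact absurd (hk.symm.trans hk') hne
        · rw [if_pos hk, if_neg hk', add_zero]
          rcases hs with rfl | rfl
          exacts [⟨1, by norm_num⟩, ⟨-1, by norm_num⟩]
        · rw [if_neg hk, if_pos hk', zero_add]
          rcases ht with rfl | rfl
          exacts [⟨1, by norm_num⟩, ⟨-1, by norm_num⟩]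
        · rw [if_neg hk, if_neg hk', add_zero]
          exact ⟨0, by norm_num⟩
      · rw [sum_pair]
        rcases hs with rfl | rfl <;> rcases ht with rfl | rfl
        exacts [⟨1, by norm_num⟩, ⟨0, by norm_num⟩, ⟨0, by norm_num⟩, ⟨-1, by norm_num⟩]
      · rw [normsq_eq_inner, inner_pair_left, pair_apply, pair_apply]
        simp only [if_pos rfl, if_neg hne, if_neg hne.symm]
        rcases hs with rfl | rfl <;> rcases ht with rfl | rfl <;> norm_num
    · refine ⟨⟨Or.inr ?_, ?_⟩, ?_⟩
      · intro i
        rcases h1 i with h | h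
        exacts [⟨0, by rw [h]; norm_num⟩, ⟨-1, by rw [h]; push_cast; norm_num⟩]
      · obtain ⟨r, hr⟩ := h2
        refine ⟨2 - r, ?_⟩
        rw [ncard_neg_half v h1, hr]
        push_cast; ring
      · have : ∀ i, (v i)^2 = 1/4 := by
          intro i; rcases h1 i with h | h <;> rw [h] <;> norm_num
        rw [Finset.sum_congr rfl fun i _ => this i]
        norm_num
  · rintro ⟨⟨hint | hhalf, k, hk⟩, hnorm⟩
    · choose m hm using hint
      have hm2 : (∑ i, (m i)^2 : ℤ) = 2 := by
        have : ∑ i, (v i)^2 = ((∑ i, (m i)^2 : ℤ) : ℝ) := by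
          push_cast; exact Finset.sum_congr rfl fun i _ => by rw [hm i]
        rw [this] at hnorm; exact_mod_cast hnorm
      have hsmall : ∀ i, m i = 0 ∨ m i = 1 ∨ m i = -1 := by
        intro i
        by_contra hcon
        push_neg at hcon
        obtain ⟨h0, hp1, hm1⟩ := hcon
        have hbig : 4 ≤ (m i)^2 := by
          have : m i ≤ -2 ∨ 2 ≤ m i := by omega
          rcases this with h | h <;> nlinarith
        have hle : (m i)^2 ≤ ∑ j, (m j)^2 :=
          Finset.single_le_sum (fun j _ => sq_nonneg (m j)) (Finset.mem_univ i)
        omega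
      set T := Finset.univ.filter (fun i => m i ≠ 0) with hT
      have hsumT : ∑ i ∈ T, (m i)^2 = 2 := by
        rw [← hm2]
        apply Finset.sum_subset (Finset.filter_subset _ _)
        intro x _ hx
        simp only [hT, Finset.mem_filter, Finset.mem_univ, true_and, not_not] at hx
        simp [hx]
      have hone : ∀ i ∈ T, (m i)^2 = 1 := by
        intro i hi
        simp only [hT, Finset.mem_filter, Finset.mem_univ, true_and] at hi
        rcases hsmall i with h | h | h
        · exact absurd h hi
        · rw [h]; norm_num
        · rw [h]; norm_num
      have hcard : T.card = 2 := by
        have : ∑ i ∈ T, (m i)^2 = T.card := by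
          rw [Finset.sum_congr rfl hone]; simp
        rw [this] at hsumT; exact_mod_cast hsumT
      obtain ⟨i, j, hij, hTij⟩ := Finset.card_eq_two.mp hcard
      have hvic : v = (m i : ℝ) • EuclideanSpace.single i (1:ℝ)
          + (m j : ℝ) • EuclideanSpace.single j (1:ℝ) := by
        ext l
        rw [pair_apply]
        by_cases hl : l = i
        · subst hl; rw [if_pos rfl, if_neg, add_zero, hm l]
          intro h; exact hij h
        · by_cases hl' : l = j
          · subst hl'; rw [if_neg hl, if_pos rfl, zero_add, hm l]
          · have : l ∉ T := by rw [hTij]; simp [hl, hl']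
            simp only [hT, Finset.mem_filter, Finset.mem_univ, true_and, not_not] at this
            rw [if_neg hl, if_neg hl', hm l, this]
            norm_num
      have hmi : m i ≠ 0 := by
        have : i ∈ T := by rw [hTij]; simp
        simpa [hT] using this
      have hmj : m j ≠ 0 := by
        have : j ∈ T := by rw [hTij]; simp
        simpa [hT] using this
      have hsi : (m i : ℝ) = 1 ∨ (m i : ℝ) = -1 := by
        rcases hsmall i with h | h | h
        · exact absurd h hmi
        · left; rw [h]; norm_num
        · right; rw [h]; push_cast; norm_num
      have hsj : (m j : ℝ) = 1 ∨ (m j : ℝ) = -1 := by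
        rcases hsmall j with h | h | h
        · exact absurd h hmj
        · left; rw [h]; norm_num
        · right; rw [h]; push_cast; norm_num
      left
      rw [hvic]
      exact mem_D_pair hij hsi hsj
    · choose m hm using hhalf
      have h0 : ∑ i, ((v i)^2 - 1/4) = 0 := by
        rw [Finset.sum_sub_distrib, hnorm]
        norm_num
      have hnn : ∀ i ∈ Finset.univ, (0:ℝ) ≤ (v i)^2 - 1/4 := by
        intro i _
        rw [hm i]
        rcases le_or_gt 0 (m i) with h | h
        · have : (0:ℝ) ≤ (m i : ℝ) := by exact_mod_cast h
          nlinarith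
        · have h1 : m i ≤ -1 := by omega
          have : (m i : ℝ) ≤ -1 := by exact_mod_cast h1
          nlinarith
      have hq : ∀ i, (v i)^2 = 1/4 := by
        intro i
        have := (Finset.sum_eq_zero_iff_of_nonneg hnn).mp h0 i (Finset.mem_univ i)
        linarith
      have hpm : ∀ i, v i = 1/2 ∨ v i = -(1/2) := by
        intro i
        have : (v i - 1/2) * (v i + 1/2) = 0 := by have := hq i; nlinarith
        rcases mul_eq_zero.mp this with h | h
        · left; linarith
        · right; linarith
      right
      refine ⟨hpm, ?_⟩
      have hsum := ncard_neg_half v hpm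
      rw [hk] at hsum
      set c := ({i : Fin 8 | v i = -(1 / 2)}.ncard) with hc
      have : (c : ℤ) = 4 - 2*k := by
        have : (c : ℝ) = 4 - 2*k := by linarith
        exact_mod_cast this
      have : Even (c : ℤ) := ⟨2 - k, by omega⟩
      exact (Int.even_coe_nat c).mp this

lemma root_lat {v : V8} (h : v ∈ E8RootSystem) : E8Lat v := ((mem_iff v).1 h).1

lemma root_normsq {v : V8} (h : v ∈ E8RootSystem) : ⟪v, v⟫ = 2 := by
  rw [← normsq_eq_inner]; exact ((mem_iff v).1 h).2

lemma root_neg {v : V8} (h : v ∈ E8RootSystem) : -v ∈ E8RootSystem := by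
  rw [mem_iff]
  refine ⟨lat_neg (root_lat h), ?_⟩
  have h2 : ∀ i, ((-v) i)^2 = (v i)^2 := by
    intro i
    have : (-v) i = -(v i) := rfl
    rw [this]; ring
  rw [Finset.sum_congr rfl fun i _ => h2 i]
  exact ((mem_iff v).1 h).2

lemma root_sub {v w : V8} (hv : v ∈ E8RootSystem) (hw : w ∈ E8RootSystem)
    (h : ⟪v, w⟫ = 1) : v - w ∈ E8RootSystem := by
  rw [mem_iff]
  refine ⟨lat_sub (root_lat hv) (root_lat hw), ?_⟩
  rw [normsq_eq_inner]
  have hv2 := root_normsq hv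
  have hw2 := root_normsq hw
  have hcomm : ⟪w, v⟫ = 1 := by rw [real_inner_comm]; exact h
  rw [inner_sub_left, inner_sub_right, inner_sub_right]
  linarith

lemma ip_cases {v w : V8} (hv : v ∈ E8RootSystem) (hw : w ∈ E8RootSystem) :
    v = w ∨ v = -w ∨ ⟪v, w⟫ = 1 ∨ ⟪v, w⟫ = 0 ∨ ⟪v, w⟫ = -1 := by
  obtain ⟨k, hk⟩ := lat_normsq_even (lat_sub (root_lat hv) (root_lat hw))
  obtain ⟨l, hl⟩ := lat_normsq_even (lat_add (root_lat hv) (root_lat hw))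
  rw [normsq_eq_inner] at hk hl
  have hv2 := root_normsq hv
  have hw2 := root_normsq hw
  have hcm : ⟪w, v⟫ = ⟪v, w⟫ := real_inner_comm v w
  have hsub : ⟪v - w, v - w⟫ = 4 - 2 * ⟪v, w⟫ := by
    rw [inner_sub_left, inner_sub_right, inner_sub_right]; linarith
  have hadd : ⟪v + w, v + w⟫ = 4 + 2 * ⟪v, w⟫ := by
    rw [inner_add_left, inner_add_right, inner_add_right]; linarith
  have hk0 : (0:ℝ) ≤ 2 * (k:ℝ) := by rw [← hk]; exact real_inner_self_nonneg
  have hl0 : (0:ℝ) ≤ 2 * (l:ℝ) := by rw [← hl]; exact real_inner_self_nonneg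
  have hipk : ⟪v, w⟫ = 2 - (k:ℝ) := by rw [hsub] at hk; linarith
  have hkge : (0:ℤ) ≤ k := by
    have : (0:ℝ) ≤ (k:ℝ) := by linarith
    exact_mod_cast this
  have hkle : k ≤ 4 := by
    have hlr : (l:ℝ) = 4 - (k:ℝ) := by rw [hadd] at hl; linarith
    have : (0:ℝ) ≤ 4 - (k:ℝ) := by linarith
    have : (k:ℝ) ≤ 4 := by linarith
    exact_mod_cast this
  interval_cases k
  · left
    have : ⟪v - w, v - w⟫ = 0 := by rw [hk]; norm_num
    have := inner_self_eq_zero.mp this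
    exact sub_eq_zero.mp this
  · right; right; left; rw [hipk]; norm_num
  · right; right; right; left; rw [hipk]; norm_num
  · right; right; right; right; rw [hipk]; norm_num
  · right; left
    have h4 : ⟪v + w, v + w⟫ = 0 := by
      rw [hadd, hipk]; norm_num
    have := inner_self_eq_zero.mp h4
    exact eq_neg_of_add_eq_zero_left this

lemma exists_fresh2 (i j : Fin 8) :
    ∃ p q : Fin 8, p ≠ q ∧ p ≠ i ∧ p ≠ j ∧ q ≠ i ∧ q ≠ j := by
  have hcard : (({i, j} : Finset (Fin 8))).card ≤ 2 :=
    (Finset.card_insert_le _ _).trans (by simp)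
  have h6 : 1 < (Finset.univ \ ({i, j} : Finset (Fin 8))).card := by
    rw [Finset.card_sdiff_of_subset (Finset.subset_univ _), Finset.card_univ, Fintype.card_fin]
    omega
  obtain ⟨p, hp, q, hq, hpq⟩ := Finset.one_lt_card.mp h6
  rw [Finset.mem_sdiff] at hp hq
  have hp' := hp.2
  have hq' := hq.2
  simp only [Finset.mem_insert, Finset.mem_singleton] at hp' hq'
  push_neg at hp' hq'
  exact ⟨p, q, hpq, hp'.1, hp'.2, hq'.1, hq'.2⟩

lemma D_subset : DRootSystem 8 ⊆ E8RootSystem := Set.subset_union_left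

lemma exists_neighbor {x : V8} (hx : x ∈ E8RootSystem) :
    ∃ b, b ∈ E8RootSystem ∧ ⟪x, b⟫ = 1 := by
  rcases hx with ⟨i, j, hij, s, t, hs, ht, rfl⟩ | ⟨h1, _⟩
  · obtain ⟨p, q, hpq, hpi, hpj, _, _⟩ := exists_fresh2 i j
    refine ⟨s • EuclideanSpace.single i 1 + 1 • EuclideanSpace.single p 1,
      D_subset (mem_D_pair (Ne.symm hpi) hs (Or.inl rfl)), ?_⟩
    rw [real_inner_comm, inner_pair_left, pair_apply, pair_apply]
    rw [if_pos rfl, if_neg (ne_of_lt hij), if_neg hpi, if_neg hpj]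
    rcases hs with rfl | rfl <;> norm_num
  · have hs0 : 2 * x 0 = 1 ∨ 2 * x 0 = -1 := by
      rcases h1 0 with h | h <;> rw [h] <;> [left; right] <;> norm_num
    have hs1 : 2 * x 1 = 1 ∨ 2 * x 1 = -1 := by
      rcases h1 1 with h | h <;> rw [h] <;> [left; right] <;> norm_num
    refine ⟨(2 * x 0) • EuclideanSpace.single 0 1 + (2 * x 1) • EuclideanSpace.single 1 1,
      D_subset (mem_D_pair (by decide) hs0 hs1), ?_⟩
    rw [real_inner_comm, inner_pair_left]
    rcases h1 0 with h0 | h0 <;> rcases h1 1 with h1' | h1' <;> rw [h0, h1'] <;> norm_num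

lemma decomp_DD {a b : V8} {i j k l : Fin 8} {s1 s2 s3 s4 : ℝ}
    (hij : i < j) (hkl : k < l)
    (hs1 : s1 = 1 ∨ s1 = -1) (hs2 : s2 = 1 ∨ s2 = -1)
    (hs3 : s3 = 1 ∨ s3 = -1) (hs4 : s4 = 1 ∨ s4 = -1)
    (hA : a = s1 • EuclideanSpace.single i (1:ℝ) + s2 • EuclideanSpace.single j (1:ℝ))
    (hB : b = s3 • EuclideanSpace.single k (1:ℝ) + s4 • EuclideanSpace.single l (1:ℝ))
    (hab : ⟪a, b⟫ = 0) :
    ∃ u v : V8, u ∈ E8RootSystem ∧ v ∈ E8RootSystem ∧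
      ⟪u, a⟫ = 1 ∧ ⟪u, b⟫ = 1 ∧ ⟪v, a⟫ = 1 ∧ ⟪v, b⟫ = 1 ∧ ⟪u, v⟫ = 1 := by
  have hija : i ≠ j := ne_of_lt hij
  have hkla : k ≠ l := ne_of_lt hkl
  rw [hA, hB, inner_pair_left, pair_apply, pair_apply] at hab
  by_cases hik : i = k
  · subst hik
    have hil : i ≠ l := ne_of_lt hkl
    by_cases hjl : j = l
    · subst hjl
      rw [if_pos rfl, if_neg hil, if_neg (Ne.symm hija), if_pos rfl] at hab
      obtain ⟨p, q, hpq, hpi, hpj, hqi, hqj⟩ := exists_fresh2 i j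
      by_cases h31 : s3 = s1
      · refine ⟨s1 • EuclideanSpace.single i 1 + 1 • EuclideanSpace.single p 1,
          s1 • EuclideanSpace.single i 1 + 1 • EuclideanSpace.single q 1,
          D_subset (mem_D_pair (Ne.symm hpi) hs1 (Or.inl rfl)),
          D_subset (mem_D_pair (Ne.symm hqi) hs1 (Or.inl rfl)), ?_, ?_, ?_, ?_, ?_⟩ <;>
          (try rw [hA]) <;> (try rw [hB])
        · rw [inner_pair_left, pair_apply, pair_apply,
            if_pos rfl, if_neg hija, if_neg hpi, if_neg hpj]
          rcases hs1 with rfl | rfl <;> norm_num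
        · rw [inner_pair_left, pair_apply, pair_apply,
            if_pos rfl, if_neg hil, if_neg hpi, if_neg hpj, h31]
          rcases hs1 with rfl | rfl <;> norm_num
        · rw [inner_pair_left, pair_apply, pair_apply,
            if_pos rfl, if_neg hija, if_neg hqi, if_neg hqj]
          rcases hs1 with rfl | rfl <;> norm_num
        · rw [inner_pair_left, pair_apply, pair_apply,
            if_pos rfl, if_neg hil, if_neg hqi, if_neg hqj, h31]
          rcases hs1 with rfl | rfl <;> norm_num
        · rw [inner_pair_left, pair_apply, pair_apply,
            if_pos rfl, if_neg (Ne.symm hqi), if_neg hpi, if_neg hpq]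
          rcases hs1 with rfl | rfl <;> norm_num
      · have h13 : s1 * s3 = -1 := by
          rcases hs1 with rfl | rfl <;> rcases hs3 with rfl | rfl <;>
            first | (exact absurd rfl h31) | norm_num
        have h24 : s2 * s4 = 1 := by nlinarith [hab]
        refine ⟨s2 • EuclideanSpace.single j 1 + 1 • EuclideanSpace.single p 1,
          s2 • EuclideanSpace.single j 1 + 1 • EuclideanSpace.single q 1,
          D_subset (mem_D_pair (Ne.symm hpj) hs2 (Or.inl rfl)),
          D_subset (mem_D_pair (Ne.symm hqj) hs2 (Or.inl rfl)), ?_, ?_, ?_, ?_, ?_⟩ <;>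
          (try rw [hA]) <;> (try rw [hB])
        · rw [inner_pair_left, pair_apply, pair_apply,
            if_neg (Ne.symm hija), if_pos rfl, if_neg hpi, if_neg hpj]
          rcases hs2 with rfl | rfl <;> norm_num
        · rw [inner_pair_left, pair_apply, pair_apply,
            if_neg (Ne.symm hil), if_pos rfl, if_neg hpi, if_neg hpj]
          rw [zero_add, add_zero, mul_zero, add_zero]
          linarith [h24]
        · rw [inner_pair_left, pair_apply, pair_apply,
            if_neg (Ne.symm hija), if_pos rfl, if_neg hqi, if_neg hqj]
          rcases hs2 with rfl | rfl <;> norm_num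
        · rw [inner_pair_left, pair_apply, pair_apply,
            if_neg (Ne.symm hil), if_pos rfl, if_neg hqi, if_neg hqj]
          rw [zero_add, add_zero, mul_zero, add_zero]
          linarith [h24]
        · rw [inner_pair_left, pair_apply, pair_apply,
            if_neg (Ne.symm hqj), if_pos rfl, if_neg hpj, if_neg hpq]
          rcases hs2 with rfl | rfl <;> norm_num
    · -- j ≠ l : contradiction, ⟪a,b⟫ = s1*s3 ≠ 0
      exfalso
      rw [if_pos rfl, if_neg hil, if_neg (Ne.symm hija), if_neg hjl] at hab
      rcases hs1 with rfl | rfl <;> rcases hs3 with rfl | rfl <;> norm_num at hab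
  · -- i ≠ k
    by_cases hil : i = l
    · subst hil
      exfalso
      have hji : j ≠ i := Ne.symm hija
      have hjk : j ≠ k := fun h => (by omega : ¬ (k < i ∧ i < j ∧ j = k)) ⟨hkl, hij, h⟩
      rw [if_neg hik, if_pos rfl, if_neg hjk, if_neg hji] at hab
      rcases hs1 with rfl | rfl <;> rcases hs4 with rfl | rfl <;> norm_num at hab
    · by_cases hjk : j = k
      · subst hjk
        exfalso
        have hjl : j ≠ l := ne_of_lt hkl
        rw [if_neg hik, if_neg hil, if_pos rfl, if_neg hjl] at hab
        rcases hs2 with rfl | rfl <;> rcases hs3 with rfl | rfl <;> norm_num at hab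
      · by_cases hjl : j = l
        · subst hjl
          exfalso
          rw [if_neg hik, if_neg hil, if_neg hjk, if_pos rfl] at hab
          rcases hs2 with rfl | rfl <;> rcases hs4 with rfl | rfl <;> norm_num at hab
        · refine ⟨s1 • EuclideanSpace.single i 1 + s3 • EuclideanSpace.single k 1,
            s1 • EuclideanSpace.single i 1 + s4 • EuclideanSpace.single l 1,
            D_subset (mem_D_pair hik hs1 hs3),
            D_subset (mem_D_pair hil hs1 hs4), ?_, ?_, ?_, ?_, ?_⟩ <;>
            (try rw [hA]) <;> (try rw [hB])
          · rw [inner_pair_left, pair_apply, pair_apply,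
              if_pos rfl, if_neg hija, if_neg (Ne.symm hik), if_neg (Ne.symm hjk)]
            rcases hs1 with rfl | rfl <;> norm_num
          · rw [inner_pair_left, pair_apply, pair_apply,
              if_neg hik, if_neg hil, if_pos rfl, if_neg hkla]
            rcases hs3 with rfl | rfl <;> norm_num
          · rw [inner_pair_left, pair_apply, pair_apply,
              if_pos rfl, if_neg hija, if_neg (Ne.symm hil), if_neg (Ne.symm hjl)]
            rcases hs1 with rfl | rfl <;> norm_num
          · rw [inner_pair_left, pair_apply, pair_apply,
              if_neg hik, if_neg hil, if_neg (Ne.symm hkla), if_pos rfl]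
            rcases hs4 with rfl | rfl <;> norm_num
          · rw [inner_pair_left, pair_apply, pair_apply,
              if_pos rfl, if_neg hil, if_neg (Ne.symm hik), if_neg hkla]
            rcases hs1 with rfl | rfl <;> norm_num

lemma decomp_DH {a b : V8} {i j : Fin 8} {s1 s2 : ℝ}
    (hij : i < j)
    (hs1 : s1 = 1 ∨ s1 = -1) (hs2 : s2 = 1 ∨ s2 = -1)
    (hA : a = s1 • EuclideanSpace.single i (1:ℝ) + s2 • EuclideanSpace.single j (1:ℝ))
    (hb1 : ∀ m, b m = 1/2 ∨ b m = -(1/2))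
    (hab : ⟪a, b⟫ = 0) :
    ∃ u v : V8, u ∈ E8RootSystem ∧ v ∈ E8RootSystem ∧
      ⟪u, a⟫ = 1 ∧ ⟪u, b⟫ = 1 ∧ ⟪v, a⟫ = 1 ∧ ⟪v, b⟫ = 1 ∧ ⟪u, v⟫ = 1 := by
  have hija : i ≠ j := ne_of_lt hij
  rw [hA, inner_pair_left] at hab
  obtain ⟨p, q, hpq, hpi, hpj, hqi, hqj⟩ := exists_fresh2 i j
  have hbp : 2 * b p = 1 ∨ 2 * b p = -1 := by
    rcases hb1 p with h | h <;> rw [h] <;> [left; right] <;> norm_num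
  have hbq : 2 * b q = 1 ∨ 2 * b q = -1 := by
    rcases hb1 q with h | h <;> rw [h] <;> [left; right] <;> norm_num
  have hbp2 : 2 * b p * b p = 1/2 := by rcases hb1 p with h | h <;> rw [h] <;> norm_num
  have hbq2 : 2 * b q * b q = 1/2 := by rcases hb1 q with h | h <;> rw [h] <;> norm_num
  by_cases hc : 2 * b i = s1
  · have hsb : s1 * b i = 1/2 := by rcases hs1 with rfl | rfl <;> linarith
    refine ⟨s1 • EuclideanSpace.single i 1 + (2 * b p) • EuclideanSpace.single p 1,
      s1 • EuclideanSpace.single i 1 + (2 * b q) • EuclideanSpace.single q 1,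
      D_subset (mem_D_pair (Ne.symm hpi) hs1 hbp),
      D_subset (mem_D_pair (Ne.symm hqi) hs1 hbq), ?_, ?_, ?_, ?_, ?_⟩
    · rw [hA, inner_pair_left, pair_apply, pair_apply,
        if_pos rfl, if_neg hija, if_neg hpi, if_neg hpj]
      rcases hs1 with rfl | rfl <;> norm_num
    · rw [inner_pair_left]
      linarith
    · rw [hA, inner_pair_left, pair_apply, pair_apply,
        if_pos rfl, if_neg hija, if_neg hqi, if_neg hqj]
      rcases hs1 with rfl | rfl <;> norm_num
    · rw [inner_pair_left]
      linarith
    · rw [inner_pair_left, pair_apply, pair_apply,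
        if_pos rfl, if_neg (Ne.symm hqi), if_neg hpi, if_neg hpq]
      rcases hs1 with rfl | rfl <;> norm_num
  · have hc' : 2 * b i = -s1 := by
      rcases hb1 i with h | h <;> rw [h] at hc ⊢ <;> rcases hs1 with rfl | rfl <;>
        norm_num at hc <;> norm_num
    have hsb : s1 * b i = -(1/2) := by rcases hs1 with rfl | rfl <;> linarith
    have hsb2 : s2 * b j = 1/2 := by linarith
    refine ⟨s2 • EuclideanSpace.single j 1 + (2 * b p) • EuclideanSpace.single p 1,
      s2 • EuclideanSpace.single j 1 + (2 * b q) • EuclideanSpace.single q 1,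
      D_subset (mem_D_pair (Ne.symm hpj) hs2 hbp),
      D_subset (mem_D_pair (Ne.symm hqj) hs2 hbq), ?_, ?_, ?_, ?_, ?_⟩
    · rw [hA, inner_pair_left, pair_apply, pair_apply,
        if_neg (Ne.symm hija), if_pos rfl, if_neg hpi, if_neg hpj]
      rcases hs2 with rfl | rfl <;> norm_num
    · rw [inner_pair_left]
      linarith
    · rw [hA, inner_pair_left, pair_apply, pair_apply,
        if_neg (Ne.symm hija), if_pos rfl, if_neg hqi, if_neg hqj]
      rcases hs2 with rfl | rfl <;> norm_num
    · rw [inner_pair_left]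
      linarith
    · rw [inner_pair_left, pair_apply, pair_apply,
        if_neg (Ne.symm hqj), if_pos rfl, if_neg hpj, if_neg hpq]
      rcases hs2 with rfl | rfl <;> norm_num

lemma decomp_HH {a b : V8}
    (ha1 : ∀ m, a m = 1/2 ∨ a m = -(1/2))
    (hb1 : ∀ m, b m = 1/2 ∨ b m = -(1/2))
    (hab : ⟪a, b⟫ = 0) :
    ∃ u v : V8, u ∈ E8RootSystem ∧ v ∈ E8RootSystem ∧
      ⟪u, a⟫ = 1 ∧ ⟪u, b⟫ = 1 ∧ ⟪v, a⟫ = 1 ∧ ⟪v, b⟫ = 1 ∧ ⟪u, v⟫ = 1 := by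
  classical
  rw [inner_euc] at hab
  set D := Finset.univ.filter (fun m => a m = b m) with hD
  have hterm : ∀ m, a m * b m = if a m = b m then 1/4 else -(1/4) := by
    intro m
    rcases ha1 m with h | h <;> rcases hb1 m with h' | h' <;> rw [h, h'] <;>
      first
        | (rw [if_pos rfl]; norm_num)
        | (rw [if_neg (by norm_num)]; norm_num)
  rw [Finset.sum_congr rfl fun m _ => hterm m, Finset.sum_ite, Finset.sum_const,
    Finset.sum_const] at hab
  have hcards := Finset.card_filter_add_card_filter_not
    (s := (Finset.univ : Finset (Fin 8))) (p := fun m => a m = b m)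
  rw [Finset.card_univ, Fintype.card_fin] at hcards
  have hcardD : D.card = 4 := by
    simp only [nsmul_eq_mul] at hab
    have hc2 : ((Finset.univ.filter (fun m => ¬ a m = b m)).card : ℝ) = (D.card : ℝ) := by
      rw [hD]; linarith
    have hc2' : (Finset.univ.filter (fun m => ¬ a m = b m)).card = D.card := by
      exact_mod_cast hc2
    rw [hD] at hc2' ⊢
    omega
  have h0 : 0 < D.card := by omega
  obtain ⟨i, hiD⟩ := Finset.card_pos.mp h0
  have h1 : 0 < (D.erase i).card := by rw [Finset.card_erase_of_mem hiD]; omega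
  obtain ⟨j, hjE⟩ := Finset.card_pos.mp h1
  have hji : j ≠ i := (Finset.mem_erase.mp hjE).1
  have hjD : j ∈ D := (Finset.mem_erase.mp hjE).2
  have h2 : 0 < ((D.erase i).erase j).card := by
    rw [Finset.card_erase_of_mem hjE, Finset.card_erase_of_mem hiD]; omega
  obtain ⟨k, hkE⟩ := Finset.card_pos.mp h2
  have hkj : k ≠ j := (Finset.mem_erase.mp hkE).1
  have hki : k ≠ i := (Finset.mem_erase.mp (Finset.mem_erase.mp hkE).2).1
  have hkD : k ∈ D := (Finset.mem_erase.mp (Finset.mem_erase.mp hkE).2).2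
  have hiab : a i = b i := (Finset.mem_filter.mp hiD).2
  have hjab : a j = b j := (Finset.mem_filter.mp hjD).2
  have hkab : a k = b k := (Finset.mem_filter.mp hkD).2
  have hsi : 2 * a i = 1 ∨ 2 * a i = -1 := by
    rcases ha1 i with h | h <;> rw [h] <;> [left; right] <;> norm_num
  have hsj : 2 * a j = 1 ∨ 2 * a j = -1 := by
    rcases ha1 j with h | h <;> rw [h] <;> [left; right] <;> norm_num
  have hsk : 2 * a k = 1 ∨ 2 * a k = -1 := by
    rcases ha1 k with h | h <;> rw [h] <;> [left; right] <;> norm_num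
  have hai2 : 2 * a i * a i = 1/2 := by rcases ha1 i with h | h <;> rw [h] <;> norm_num
  have haj2 : 2 * a j * a j = 1/2 := by rcases ha1 j with h | h <;> rw [h] <;> norm_num
  have hak2 : 2 * a k * a k = 1/2 := by rcases ha1 k with h | h <;> rw [h] <;> norm_num
  refine ⟨(2 * a i) • EuclideanSpace.single i 1 + (2 * a j) • EuclideanSpace.single j 1,
    (2 * a i) • EuclideanSpace.single i 1 + (2 * a k) • EuclideanSpace.single k 1,
    D_subset (mem_D_pair (Ne.symm hji) hsi hsj),
    D_subset (mem_D_pair (Ne.symm hki) hsi hsk), ?_, ?_, ?_, ?_, ?_⟩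
  · rw [inner_pair_left]; linarith
  · rw [inner_pair_left, ← hiab, ← hjab]; linarith
  · rw [inner_pair_left]; linarith
  · rw [inner_pair_left, ← hiab, ← hkab]; linarith
  · rw [inner_pair_left, pair_apply, pair_apply,
      if_pos rfl, if_neg hki.symm, if_neg hji, if_neg (Ne.symm hkj)]
    rcases ha1 i with h | h <;> rw [h] <;> norm_num

lemma decomp {a b : V8} (ha : a ∈ E8RootSystem) (hb : b ∈ E8RootSystem)
    (hab : ⟪a, b⟫ = 0) :
    ∃ u v : V8, u ∈ E8RootSystem ∧ v ∈ E8RootSystem ∧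
      ⟪u, a⟫ = 1 ∧ ⟪u, b⟫ = 1 ∧ ⟪v, a⟫ = 1 ∧ ⟪v, b⟫ = 1 ∧ ⟪u, v⟫ = 1 := by
  have hba : ⟪b, a⟫ = 0 := by rw [real_inner_comm]; exact hab
  rcases ha with ⟨i, j, hij, s1, s2, hs1, hs2, hA⟩ | ⟨ha1, _⟩
  · rcases hb with ⟨k, l, hkl, s3, s4, hs3, hs4, hB⟩ | ⟨hb1, _⟩
    · exact decomp_DD hij hkl hs1 hs2 hs3 hs4 hA hB hab
    · exact decomp_DH hij hs1 hs2 hA hb1 hab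
  · rcases hb with ⟨k, l, hkl, s3, s4, hs3, hs4, hB⟩ | ⟨hb1, _⟩
    · obtain ⟨u, v, hu, hv, h1, h2, h3, h4, h5⟩ := decomp_DH hkl hs3 hs4 hB ha1 hba
      exact ⟨u, v, hu, hv, h2, h1, h4, h3, h5⟩
    · exact decomp_HH ha1 hb1 hab

lemma root_compl {a b u : V8} (ha : a ∈ E8RootSystem) (hb : b ∈ E8RootSystem)
    (hu : u ∈ E8RootSystem) (hab : ⟪a, b⟫ = 0) (hua : ⟪u, a⟫ = 1) (hub : ⟪u, b⟫ = 1) :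
    a + b - u ∈ E8RootSystem := by
  rw [mem_iff]
  refine ⟨lat_sub (lat_add (root_lat ha) (root_lat hb)) (root_lat hu), ?_⟩
  rw [normsq_eq_inner]
  have ha2 := root_normsq ha
  have hb2 := root_normsq hb
  have hu2 := root_normsq hu
  have hba : ⟪b, a⟫ = 0 := by rw [real_inner_comm]; exact hab
  have hau : ⟪a, u⟫ = 1 := by rw [real_inner_comm]; exact hua
  have hbu : ⟪b, u⟫ = 1 := by rw [real_inner_comm]; exact hub
  rw [inner_sub_left, inner_sub_right, inner_sub_right, inner_add_left, inner_add_left,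
    inner_add_right, inner_add_right, inner_add_right]
  linarith

section Gzero

variable (y : V8 → V8)
variable (hy0 : ∀ x ∈ E8RootSystem, ⟪x, y x⟫ = 0)
variable (hy1 : ∀ x ∈ E8RootSystem, ∀ x' ∈ E8RootSystem, x ≠ x' → ⟪x, x'⟫ = 1 →
  ⟪x, y x'⟫ + ⟪x', y x⟫ ≤ 0)

lemma ne_of_ip_one {x x' : V8} (hx : x ∈ E8RootSystem) (h : ⟪x, x'⟫ = 1) : x ≠ x' := by
  intro h'
  subst h'
  have := root_normsq hx
  linarith

include hy0 hy1 in
lemma key1 {a b : V8} (ha : a ∈ E8RootSystem) (hb : b ∈ E8RootSystem)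
    (hab : ⟪a, b⟫ = 1) : ⟪a, y b⟫ + ⟪b, y a⟫ = 0 := by
  have hba : ⟪b, a⟫ = 1 := by rw [real_inner_comm]; exact hab
  have hc : a - b ∈ E8RootSystem := root_sub ha hb hab
  set c := a - b with hcdef
  have ha2 := root_normsq ha
  have hb2 := root_normsq hb
  have hac : ⟪a, c⟫ = 1 := by rw [hcdef, inner_sub_right]; linarith
  have hbc : ⟪b, c⟫ = -1 := by rw [hcdef, inner_sub_right]; linarith
  have hbnc : ⟪b, -c⟫ = 1 := by rw [inner_neg_right]; linarith
  have hnbc : ⟪-b, c⟫ = 1 := by rw [inner_neg_left]; linarith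
  have hnanb : ⟪-a, -b⟫ = 1 := by rw [inner_neg_neg]; exact hab
  have hnanc : ⟪-a, -c⟫ = 1 := by rw [inner_neg_neg]; exact hac
  have hna := root_neg ha
  have hnb := root_neg hb
  have hnc := root_neg hc
  have h1 := hy1 a ha b hb (ne_of_ip_one ha hab) hab
  have h2 := hy1 a ha c hc (ne_of_ip_one ha hac) hac
  have h3 := hy1 (-a) hna (-b) hnb (ne_of_ip_one hna hnanb) hnanb
  have h4 := hy1 (-a) hna (-c) hnc (ne_of_ip_one hna hnanc) hnanc
  have h5 := hy1 b hb (-c) hnc (ne_of_ip_one hb hbnc) hbnc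
  have h6 := hy1 (-b) hnb c hc (ne_of_ip_one hnb hnbc) hnbc
  have Ea : ⟪b, y a⟫ + ⟪c, y a⟫ = 0 := by
    rw [← inner_add_left]
    have : b + c = a := by rw [hcdef]; abel
    rw [this]; exact hy0 a ha
  have Eb : ⟪a, y b⟫ + ⟪-c, y b⟫ = 0 := by
    rw [← inner_add_left]
    have : a + -c = b := by rw [hcdef]; abel
    rw [this]; exact hy0 b hb
  have Ec : ⟪a, y c⟫ + ⟪-b, y c⟫ = 0 := by
    rw [← inner_add_left]
    have : a + -b = c := by rw [hcdef]; abel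
    rw [this]; exact hy0 c hc
  have Ena : ⟪-b, y (-a)⟫ + ⟪-c, y (-a)⟫ = 0 := by
    rw [← inner_add_left]
    have : -b + -c = -a := by rw [hcdef]; abel
    rw [this]; exact hy0 (-a) hna
  have Enb : ⟪-a, y (-b)⟫ + ⟪c, y (-b)⟫ = 0 := by
    rw [← inner_add_left]
    have : -a + c = -b := by rw [hcdef]; abel
    rw [this]; exact hy0 (-b) hnb
  have Enc : ⟪-a, y (-c)⟫ + ⟪b, y (-c)⟫ = 0 := by
    rw [← inner_add_left]
    have : -a + b = -c := by rw [hcdef]; abel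
    rw [this]; exact hy0 (-c) hnc
  linarith

include hy0 hy1 in
lemma key2 {a b : V8} (ha : a ∈ E8RootSystem) (hb : b ∈ E8RootSystem)
    (hab : ⟪a, b⟫ = -1) : ⟪a, y b⟫ + ⟪b, y a⟫ = 0 := by
  have ha2 := root_normsq ha
  have hb2 := root_normsq hb
  have hba : ⟪b, a⟫ = -1 := by rw [real_inner_comm]; exact hab
  have hanb : ⟪a, -b⟫ = 1 := by rw [inner_neg_right]; linarith
  have hw : a - -b ∈ E8RootSystem := root_sub ha (root_neg hb) hanb
  have hweq : a - -b = a + b := by abel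
  rw [hweq] at hw
  have haw : ⟪a, a + b⟫ = 1 := by rw [inner_add_right]; linarith
  have hbw : ⟪b, a + b⟫ = 1 := by rw [inner_add_right]; linarith
  have g1 := key1 y hy0 hy1 ha hw haw
  have g2 := key1 y hy0 hy1 hb hw hbw
  have F1 : ⟪a, y (a + b)⟫ + ⟪b, y (a + b)⟫ = 0 := by
    rw [← inner_add_left]; exact hy0 (a + b) hw
  have F2 : ⟪a + b, y a⟫ = ⟪b, y a⟫ := by
    rw [inner_add_left, hy0 a ha, zero_add]
  have F3 : ⟪a + b, y b⟫ = ⟪a, y b⟫ := by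
    rw [inner_add_left, hy0 b hb, add_zero]
  linarith

include hy0 hy1 in
lemma key3 {a : V8} (ha : a ∈ E8RootSystem) :
    ⟪a, y (-a)⟫ + ⟪-a, y a⟫ = 0 := by
  obtain ⟨c, hc, hac⟩ := exists_neighbor ha
  have ha2 := root_normsq ha
  have hd : a - c ∈ E8RootSystem := root_sub ha hc hac
  set d := a - c with hddef
  have hna := root_neg ha
  have had : ⟪a, d⟫ = 1 := by rw [hddef, inner_sub_right]; linarith
  have hnac : ⟪-a, c⟫ = -1 := by rw [inner_neg_left]; linarith
  have hnad : ⟪-a, d⟫ = -1 := by rw [inner_neg_left]; linarith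
  have g1 := key2 y hy0 hy1 hna hc hnac
  have g2 := key2 y hy0 hy1 hna hd hnad
  have g3 := key1 y hy0 hy1 ha hc hac
  have g4 := key1 y hy0 hy1 ha hd had
  have E1 : ⟪c, y (-a)⟫ + ⟪d, y (-a)⟫ = ⟪a, y (-a)⟫ := by
    rw [← inner_add_left]
    have : c + d = a := by rw [hddef]; abel
    rw [this]
  have E2 : ⟪c, y a⟫ + ⟪d, y a⟫ = 0 := by
    rw [← inner_add_left]
    have : c + d = a := by rw [hddef]; abel
    rw [this]; exact hy0 a ha
  have E3 : ⟪-a, y c⟫ = -⟪a, y c⟫ := by rw [inner_neg_left]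
  have E4 : ⟪-a, y d⟫ = -⟪a, y d⟫ := by rw [inner_neg_left]
  have E5 : ⟪-a, y a⟫ = -⟪a, y a⟫ := by rw [inner_neg_left]
  have E6 := hy0 a ha
  linarith

include hy0 in
lemma Rrel {a b u u' : V8} (ha : a ∈ E8RootSystem) (hb : b ∈ E8RootSystem)
    (hu : u ∈ E8RootSystem) (hu' : u' ∈ E8RootSystem)
    (hsum : u + u' = a + b)
    (g1 : ⟪a, y u⟫ + ⟪u, y a⟫ = 0) (g2 : ⟪a, y u'⟫ + ⟪u', y a⟫ = 0)
    (g3 : ⟪b, y u⟫ + ⟪u, y b⟫ = 0) (g4 : ⟪b, y u'⟫ + ⟪u', y b⟫ = 0) :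
    (⟪a, y b⟫ + ⟪b, y a⟫) + (⟪u, y u'⟫ + ⟪u', y u⟫) = 0 := by
  have ea : ⟪u, y a⟫ + ⟪u', y a⟫ = ⟪b, y a⟫ := by
    rw [← inner_add_left, hsum, inner_add_left, hy0 a ha, zero_add]
  have eb : ⟪u, y b⟫ + ⟪u', y b⟫ = ⟪a, y b⟫ := by
    rw [← inner_add_left, hsum, inner_add_left, hy0 b hb, add_zero]
  have eu : ⟪a, y u⟫ + ⟪b, y u⟫ = ⟪u', y u⟫ := by
    rw [← inner_add_left, ← hsum, inner_add_left, hy0 u hu, zero_add]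
  have eu' : ⟪a, y u'⟫ + ⟪b, y u'⟫ = ⟪u, y u'⟫ := by
    rw [← inner_add_left, ← hsum, inner_add_left, hy0 u' hu', add_zero]
  linarith

include hy0 hy1 in
lemma key4 {a b : V8} (ha : a ∈ E8RootSystem) (hb : b ∈ E8RootSystem)
    (hab : ⟪a, b⟫ = 0) : ⟪a, y b⟫ + ⟪b, y a⟫ = 0 := by
  obtain ⟨u, v, hu, hv, hua, hub, hva, hvb, huv⟩ := decomp ha hb hab
  have ha2 := root_normsq ha
  have hb2 := root_normsq hb
  have hu2 := root_normsq hu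
  have hv2 := root_normsq hv
  have hba : ⟪b, a⟫ = 0 := by rw [real_inner_comm]; exact hab
  have hau : ⟪a, u⟫ = 1 := by rw [real_inner_comm]; exact hua
  have hbu : ⟪b, u⟫ = 1 := by rw [real_inner_comm]; exact hub
  have hav : ⟪a, v⟫ = 1 := by rw [real_inner_comm]; exact hva
  have hbv : ⟪b, v⟫ = 1 := by rw [real_inner_comm]; exact hvb
  have hu' : a + b - u ∈ E8RootSystem := root_compl ha hb hu hab hua hub
  have hv' : a + b - v ∈ E8RootSystem := root_compl ha hb hv hab hva hvb
  set u' := a + b - u with hu'def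
  set v' := a + b - v with hv'def
  have hsumu : u + u' = a + b := by rw [hu'def]; abel
  have hsumv : v + v' = a + b := by rw [hv'def]; abel
  -- inner products with the complements
  have hau' : ⟪a, u'⟫ = 1 := by
    rw [hu'def, inner_sub_right, inner_add_right]; linarith
  have hbu' : ⟪b, u'⟫ = 1 := by
    rw [hu'def, inner_sub_right, inner_add_right]; linarith
  have hav' : ⟪a, v'⟫ = 1 := by
    rw [hv'def, inner_sub_right, inner_add_right]; linarith
  have hbv' : ⟪b, v'⟫ = 1 := by
    rw [hv'def, inner_sub_right, inner_add_right]; linarith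
  have huv' : ⟪u, v'⟫ = 1 := by
    rw [hv'def, inner_sub_right, inner_add_right]; linarith
  have hu'v : ⟪u', v⟫ = 1 := by
    rw [hu'def, inner_sub_left, inner_add_left]
    have h1 : ⟪u, v⟫ = 1 := huv
    linarith
  have hu'v' : ⟪u', v'⟫ = 1 := by
    rw [hu'def, inner_sub_left, inner_add_left]
    linarith
  -- all the key1 instances
  have gau := key1 y hy0 hy1 ha hu hau
  have gau' := key1 y hy0 hy1 ha hu' hau'
  have gbu := key1 y hy0 hy1 hb hu hbu
  have gbu' := key1 y hy0 hy1 hb hu' hbu'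
  have gav := key1 y hy0 hy1 ha hv hav
  have gav' := key1 y hy0 hy1 ha hv' hav'
  have gbv := key1 y hy0 hy1 hb hv hbv
  have gbv' := key1 y hy0 hy1 hb hv' hbv'
  have guv := key1 y hy0 hy1 hu hv huv
  have guv' := key1 y hy0 hy1 hu hv' huv'
  have gu'v := key1 y hy0 hy1 hu' hv hu'v
  have gu'v' := key1 y hy0 hy1 hu' hv' hu'v'
  have r1 := Rrel y hy0 ha hb hu hu' hsumu gau gau' gbu gbu'
  have r2 := Rrel y hy0 ha hb hv hv' hsumv gav gav' gbv gbv'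
  have r3 := Rrel y hy0 hu hu' hv hv' (by rw [hsumv, hsumu]) guv guv' gu'v gu'v'
  linarith

include hy0 hy1 in
lemma gzero {a b : V8} (ha : a ∈ E8RootSystem) (hb : b ∈ E8RootSystem) :
    ⟪a, y b⟫ + ⟪b, y a⟫ = 0 := by
  rcases ip_cases ha hb with rfl | rfl | h | h | h
  · rw [hy0 a ha]; norm_num
  · have := key3 y hy0 hy1 hb
    linarith [this]
  · exact key1 y hy0 hy1 ha hb h
  · exact key4 y hy0 hy1 ha hb h
  · exact key2 y hy0 hy1 ha hb h

end Gzero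

noncomputable def wvec : Fin 8 → V8 := fun k =>
  if k = 0 then EuclideanSpace.single 0 1 + EuclideanSpace.single 1 1
  else if k = 1 then EuclideanSpace.single 0 1 - EuclideanSpace.single 1 1
  else EuclideanSpace.single 0 1 + EuclideanSpace.single k 1

lemma wvec0 : wvec 0 = EuclideanSpace.single 0 1 + EuclideanSpace.single 1 1 := by
  simp [wvec]

lemma wvec1 : wvec 1 = EuclideanSpace.single 0 1 - EuclideanSpace.single 1 1 := by
  simp [wvec]

lemma wveck (k : Fin 8) (h0 : k ≠ 0) (h1 : k ≠ 1) :
    wvec k = EuclideanSpace.single 0 1 + EuclideanSpace.single k 1 := by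
  simp only [wvec]
  rw [if_neg h0, if_neg h1]

lemma wvec_mem (k : Fin 8) : wvec k ∈ E8RootSystem := by
  apply D_subset
  by_cases h0 : k = 0
  · have : wvec k = (1:ℝ) • EuclideanSpace.single (0 : Fin 8) (1:ℝ)
        + (1:ℝ) • EuclideanSpace.single (1 : Fin 8) (1:ℝ) := by
      rw [h0, wvec0]; module
    rw [this]
    exact mem_D_pair (by decide) (Or.inl rfl) (Or.inl rfl)
  · by_cases h1 : k = 1
    · have : wvec k = (1:ℝ) • EuclideanSpace.single (0 : Fin 8) (1:ℝ)
          + (-1:ℝ) • EuclideanSpace.single (1 : Fin 8) (1:ℝ) := by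
        rw [h1, wvec1]; module
      rw [this]
      exact mem_D_pair (by decide) (Or.inl rfl) (Or.inr rfl)
    · have : wvec k = (1:ℝ) • EuclideanSpace.single (0 : Fin 8) (1:ℝ)
          + (1:ℝ) • EuclideanSpace.single k (1:ℝ) := by
        rw [wveck k h0 h1]; module
      rw [this]
      exact mem_D_pair (Ne.symm h0) (Or.inl rfl) (Or.inl rfl)

lemma euclid_decomp (z : V8) : z = ∑ k, z k • EuclideanSpace.single k (1:ℝ) := by
  ext j
  have h1 : (∑ k, z k • EuclideanSpace.single k (1:ℝ)) j
      = ∑ k, z k * (EuclideanSpace.single k (1:ℝ) j) := by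
    rw [WithLp.ofLp_sum, Finset.sum_apply]
    rfl
  rw [h1]
  simp [EuclideanSpace.single_apply, mul_ite, Finset.sum_ite_eq]

lemma span_w : ⊤ ≤ Submodule.span ℝ (Set.range wvec) := by
  have h0 : EuclideanSpace.single (0 : Fin 8) (1:ℝ) ∈ Submodule.span ℝ (Set.range wvec) := by
    have he : EuclideanSpace.single (0 : Fin 8) (1:ℝ) = (1/2 : ℝ) • (wvec 0 + wvec 1) := by
      rw [wvec0, wvec1]; module
    rw [he]
    exact Submodule.smul_mem _ _ (Submodule.add_mem _
      (Submodule.subset_span ⟨0, rfl⟩) (Submodule.subset_span ⟨1, rfl⟩))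
  have hallk : ∀ k : Fin 8, EuclideanSpace.single k (1:ℝ) ∈ Submodule.span ℝ (Set.range wvec) := by
    intro k
    by_cases hk0 : k = 0
    · rw [hk0]; exact h0
    · by_cases hk1 : k = 1
      · have he : EuclideanSpace.single (1 : Fin 8) (1:ℝ)
            = wvec 0 - EuclideanSpace.single (0 : Fin 8) (1:ℝ) := by
          rw [wvec0]; abel
        rw [hk1, he]
        exact Submodule.sub_mem _ (Submodule.subset_span ⟨0, rfl⟩) h0
      · have he : EuclideanSpace.single k (1:ℝ)
            = wvec k - EuclideanSpace.single (0 : Fin 8) (1:ℝ) := by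
          rw [wveck k hk0 hk1]; abel
        rw [he]
        exact Submodule.sub_mem _ (Submodule.subset_span ⟨k, rfl⟩) h0
  intro z _
  rw [euclid_decomp z]
  exact Submodule.sum_mem _ fun k _ => Submodule.smul_mem _ _ (hallk k)

noncomputable def wbasis : Module.Basis (Fin 8) ℝ V8 :=
  basisOfTopLeSpanOfCardEqFinrank wvec span_w
    (by simp [finrank_euclideanSpace_fin])

lemma wbasis_eq : ⇑wbasis = wvec := coe_basisOfTopLeSpanOfCardEqFinrank _ _ _

lemma inner_wvec_zero {z : V8} (hz : ∀ k, ⟪wvec k, z⟫ = 0) : z = 0 := by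
  have hz' : ∀ w, w ∈ Submodule.span ℝ (Set.range wvec) → ⟪w, z⟫ = 0 := by
    intro w hw
    induction hw using Submodule.span_induction with
    | mem x h => obtain ⟨k, rfl⟩ := h; exact hz k
    | zero => exact inner_zero_left z
    | add x y hx hy ihx ihy => rw [inner_add_left, ihx, ihy]; norm_num
    | smul a x hx ihx => rw [real_inner_smul_left, ihx]; norm_num
  have := hz' z (span_w Submodule.mem_top)
  exact inner_self_eq_zero.mp this

theorem statement5 :
    ∀ y : EuclideanSpace ℝ (Fin 8) → EuclideanSpace ℝ (Fin 8),
      (∀ x ∈ E8RootSystem, ⟪x, y x⟫ = 0) →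
      (∀ x ∈ E8RootSystem, ∀ x' ∈ E8RootSystem, x ≠ x' → ⟪x, x'⟫ = 1 →
        ⟪x, y x'⟫ + ⟪x', y x⟫ ≤ 0) →
      ∃ Φ : EuclideanSpace ℝ (Fin 8) →ₗ[ℝ] EuclideanSpace ℝ (Fin 8),
        (∀ u v, ⟪Φ u, v⟫ = -⟪u, Φ v⟫) ∧ ∀ x ∈ E8RootSystem, y x = Φ x := by
  intro y hy0 hy1
  set Φ : V8 →ₗ[ℝ] V8 := wbasis.constr ℝ (fun k => y (wvec k)) with hΦdef
  have hΦw : ∀ k, Φ (wvec k) = y (wvec k) := by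
    intro k
    have hb : wbasis k = wvec k := by rw [wbasis_eq]
    conv_lhs => rw [← hb]
    rw [hΦdef, Module.Basis.constr_basis]
  have hskew : ∀ u v : V8, ⟪Φ u, v⟫ = -⟪u, Φ v⟫ := by
    have hT : LinearMap.adjoint Φ = -Φ := by
      apply wbasis.ext
      intro k
      rw [show wbasis k = wvec k from by rw [wbasis_eq]]
      have hz : LinearMap.adjoint Φ (wvec k) + Φ (wvec k) = 0 := by
        apply inner_wvec_zero
        intro j
        rw [inner_add_right, LinearMap.adjoint_inner_right, hΦw, hΦw]
        have hg := gzero y hy0 hy1 (wvec_mem j) (wvec_mem k)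
        have hc : ⟪y (wvec j), wvec k⟫ = ⟪wvec k, y (wvec j)⟫ := real_inner_comm _ _
        linarith
      have : LinearMap.adjoint Φ (wvec k) = -(Φ (wvec k)) := by
        rw [← sub_eq_zero]
        rw [sub_neg_eq_add]
        exact hz
      rw [this, LinearMap.neg_apply]
    intro u v
    have h1 : ⟪Φ u, v⟫ = ⟪u, LinearMap.adjoint Φ v⟫ := (LinearMap.adjoint_inner_right _ _ _).symm
    rw [h1, hT, LinearMap.neg_apply, inner_neg_right]
  refine ⟨Φ, hskew, ?_⟩
  intro x hx
  have hz : y x - Φ x = 0 := by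
    apply inner_wvec_zero
    intro k
    rw [inner_sub_right]
    have hg := gzero y hy0 hy1 hx (wvec_mem k)
    have h2 : ⟪Φ (wvec k), x⟫ = -⟪wvec k, Φ x⟫ := hskew (wvec k) x
    rw [hΦw] at h2
    have h3 : ⟪y (wvec k), x⟫ = ⟪x, y (wvec k)⟫ := real_inner_comm _ _
    linarith
  exact sub_eq_zero.mp hz
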